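/- Let g₀, g₁ ∈ L¹(ℝ) be probability densities, let F : ℝ → ℝ be continuous, let r > 0, A₁, A₀, B₀, B₁ ∈ ℝ, and q ∈ (0, 1]. With TPR, FPR, Δ, π, u_D, v defined as in the designer's problem, the feasible set D_q = { δ ∈ D : v(δ) ≤ q } is nonempty and weak-* compact, and there exists δ* ∈ D_q with u_D(δ*) ≥ u_D(δ) for every δ ∈ D_q; that is, the designer's quota-constrained problem admits an optimal classifier. -/

import Mathlib

open MeasureTheory

noncomputable section

/-- A classifier: a Lebesgue-measurable function `δ : ℝ → ℝ` with `0 ≤ δ s ≤ 1`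
for Lebesgue-almost every `s`. -/
def IsClassifier (δ : ℝ → ℝ) : Prop :=
  Measurable δ ∧ ∀ᵐ s ∂(volume : Measure ℝ), 0 ≤ δ s ∧ δ s ≤ 1

/-- The set `D` of all classifiers, regarded as a subset of `L∞(ℝ)` viewed as the
Banach dual of `L¹(ℝ)` with its weak-* topology. -/
def classifierSet :
    Set (WeakDual ℝ (Lp ℝ 1 (volume : Measure ℝ))) :=
  {φ | ∃ δ : ℝ → ℝ, IsClassifier δ ∧
    ∀ f : Lp ℝ 1 (volume : Measure ℝ), φ f = ∫ s, f s * δ s}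

/-- True positive rate of the classifier represented by `φ`: the pairing of `φ`
with the density `g₁ ∈ L¹(ℝ)` (i.e. `∫ g₁ δ`). -/
def TPR (g₁ : Lp ℝ 1 (volume : Measure ℝ))
    (φ : WeakDual ℝ (Lp ℝ 1 (volume : Measure ℝ))) : ℝ := φ g₁

/-- False positive rate: the pairing with `g₀` (i.e. `∫ g₀ δ`). -/
def FPR (g₀ : Lp ℝ 1 (volume : Measure ℝ))
    (φ : WeakDual ℝ (Lp ℝ 1 (volume : Measure ℝ))) : ℝ := φ g₀

/-- Equilibrium prevalence `π(δ) = F(r·(TPR(δ) − FPR(δ)))`. -/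
def prevalence (F : ℝ → ℝ) (r : ℝ) (g₀ g₁ : Lp ℝ 1 (volume : Measure ℝ))
    (φ : WeakDual ℝ (Lp ℝ 1 (volume : Measure ℝ))) : ℝ :=
  F (r * (TPR g₁ φ - FPR g₀ φ))

/-- Designer payoff
`u_D(δ) = π(δ)·(TPR(δ)·A₁ + (1−TPR(δ))·A₀) + (1−π(δ))·(FPR(δ)·B₀ + (1−FPR(δ))·B₁)`. -/
def designerPayoff (F : ℝ → ℝ) (r A₁ A₀ B₀ B₁ : ℝ)
    (g₀ g₁ : Lp ℝ 1 (volume : Measure ℝ))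
    (φ : WeakDual ℝ (Lp ℝ 1 (volume : Measure ℝ))) : ℝ :=
  prevalence F r g₀ g₁ φ * (TPR g₁ φ * A₁ + (1 - TPR g₁ φ) * A₀)
    + (1 - prevalence F r g₀ g₁ φ) * (FPR g₀ φ * B₀ + (1 - FPR g₀ φ) * B₁)

/-- Expected rewarded share `v(δ) = π(δ)·TPR(δ) + (1−π(δ))·FPR(δ)`. -/
def rewardedShare (F : ℝ → ℝ) (r : ℝ) (g₀ g₁ : Lp ℝ 1 (volume : Measure ℝ))
    (φ : WeakDual ℝ (Lp ℝ 1 (volume : Measure ℝ))) : ℝ :=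
  prevalence F r g₀ g₁ φ * TPR g₁ φ + (1 - prevalence F r g₀ g₁ φ) * FPR g₀ φ
namespace QuotaAux
open Filter Topology Set
open scoped ENNReal NNReal
open scoped Function

abbrev L1R := Lp ℝ 1 (volume : Measure ℝ)

def indL1 {s : Set ℝ} (hs : MeasurableSet s) (hμs : volume s ≠ ∞) : L1R :=
  indicatorConstLp 1 hs hμs (1 : ℝ)

lemma indL1_congr {s t : Set ℝ} (hs : MeasurableSet s) (hμs : volume s ≠ ∞)
    (ht : MeasurableSet t) (hμt : volume t ≠ ∞) (h : s = t) :
    indL1 hs hμs = indL1 ht hμt := by subst h; rfl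

lemma norm_indL1 {s : Set ℝ} (hs : MeasurableSet s) (hμs : volume s ≠ ∞) :
    ‖indL1 hs hμs‖ = (volume s).toReal := by
  rw [indL1, norm_indicatorConstLp one_ne_zero ENNReal.one_ne_top]
  simp
  rfl

lemma indL1_union {s t : Set ℝ} (hs : MeasurableSet s) (ht : MeasurableSet t)
    (hμs : volume s ≠ ∞) (hμt : volume t ≠ ∞) (hst : Disjoint s t) :
    indL1 (hs.union ht) (measure_union_ne_top hμs hμt) = indL1 hs hμs + indL1 ht hμt :=
  indicatorConstLp_disjoint_union hs ht hμs hμt hst 1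

lemma indL1_zero {s : Set ℝ} (hs : MeasurableSet s) (hμs : volume s ≠ ∞) (h : s = ∅) :
    indL1 hs hμs = 0 := by
  subst h
  refine Lp.ext (indicatorConstLp_coeFn.trans ?_)
  simp only [Set.indicator_empty]
  exact (Lp.coeFn_zero ℝ 1 volume).symm

lemma indL1_nonneg {s : Set ℝ} (hs : MeasurableSet s) (hμs : volume s ≠ ∞) :
    0 ≤ᵐ[(volume : Measure ℝ)] ⇑(indL1 hs hμs) := by
  rw [indL1]
  filter_upwards [indicatorConstLp_coeFn (p := 1) (hs := hs) (hμs := hμs) (c := (1:ℝ))] with x hx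
  rw [Pi.zero_apply, hx]
  exact Set.indicator_nonneg (fun _ _ => zero_le_one) x

lemma integral_indL1 {s : Set ℝ} (hs : MeasurableSet s) (hμs : volume s ≠ ∞) :
    ∫ x, (indL1 hs hμs) x = (volume s).toReal := by
  rw [indL1, integral_congr_ae (indicatorConstLp_coeFn), integral_indicator_const (1:ℝ) hs]
  simp
  rfl

def Pos (φ : WeakDual ℝ L1R) : Prop :=
  ∀ f : L1R, 0 ≤ᵐ[(volume : Measure ℝ)] ⇑f → 0 ≤ φ f ∧ φ f ≤ ∫ s, f s

lemma phi_indL1_nonneg {φ : WeakDual ℝ L1R} (hφ : Pos φ) {s : Set ℝ}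
    (hs : MeasurableSet s) (hμs : volume s ≠ ∞) : 0 ≤ φ (indL1 hs hμs) :=
  (hφ _ (indL1_nonneg hs hμs)).1

lemma phi_indL1_le {φ : WeakDual ℝ L1R} (hφ : Pos φ) {s : Set ℝ}
    (hs : MeasurableSet s) (hμs : volume s ≠ ∞) : φ (indL1 hs hμs) ≤ (volume s).toReal := by
  have h := (hφ _ (indL1_nonneg hs hμs)).2
  rwa [integral_indL1 hs hμs] at h

lemma tendsto_indL1 {A : ℕ → Set ℝ} {B : Set ℝ}
    (hA : ∀ n, MeasurableSet (A n)) (hB : MeasurableSet B) (hμB : volume B ≠ ∞)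
    (hfin : ∀ n, volume (A n) ≠ ∞)
    (hmono : Monotone A) (hsub : ∀ n, A n ⊆ B) (hU : ⋃ n, A n = B) :
    Tendsto (fun k => indL1 (hA k) (hfin k)) atTop (𝓝 (indL1 hB hμB)) := by
  rw [tendsto_iff_norm_sub_tendsto_zero]
  have key : ∀ k, ‖indL1 (hA k) (hfin k) - indL1 hB hμB‖ = (volume (B \ A k)).toReal := by
    intro k
    have hdm : MeasurableSet (B \ A k) := hB.diff (hA k)
    have hdf : volume (B \ A k) ≠ ∞ := ((measure_mono Set.diff_subset).trans_lt hμB.lt_top).ne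
    have hu : indL1 hB hμB = indL1 (hA k) (hfin k) + indL1 hdm hdf := by
      rw [← indL1_union (hA k) hdm (hfin k) hdf disjoint_sdiff_self_right]
      exact indL1_congr hB hμB _ _ (Set.union_diff_cancel (hsub k)).symm
    rw [hu]
    have : indL1 (hA k) (hfin k) - (indL1 (hA k) (hfin k) + indL1 hdm hdf)
        = -(indL1 hdm hdf) := by abel
    rw [this, norm_neg, norm_indL1]
  have h0 : Tendsto (fun k => volume (B \ A k)) atTop (𝓝 0) := by
    have h := tendsto_measure_iInter_atTop (μ := volume) (s := fun k => B \ A k)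
      (fun k => (hB.diff (hA k)).nullMeasurableSet)
      (fun i j hij => Set.diff_subset_diff (Set.Subset.refl B) (hmono hij))
      ⟨0, ((measure_mono Set.diff_subset).trans_lt hμB.lt_top).ne⟩
    have heq : ⋂ k, B \ A k = ∅ := by rw [← Set.diff_iUnion, hU, Set.diff_self]
    rw [heq, measure_empty] at h
    exact h
  have h1 : Tendsto (fun k => (volume (B \ A k)).toReal) atTop (𝓝 0) := by
    have := (ENNReal.tendsto_toReal (a := 0) (by simp)).comp h0
    simpa [Function.comp_def] using this
  simpa only [key] using h1

lemma tendsto_phi_indL1 (φ : WeakDual ℝ L1R) {A : ℕ → Set ℝ} {B : Set ℝ}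
    (hA : ∀ n, MeasurableSet (A n)) (hB : MeasurableSet B) (hμB : volume B ≠ ∞)
    (hfin : ∀ n, volume (A n) ≠ ∞)
    (hmono : Monotone A) (hsub : ∀ n, A n ⊆ B) (hU : ⋃ n, A n = B) :
    Tendsto (fun k => φ (indL1 (hA k) (hfin k))) atTop (𝓝 (φ (indL1 hB hμB))) :=
  ((map_continuous φ).tendsto _).comp (tendsto_indL1 hA hB hμB hfin hmono hsub hU)

lemma hasSum_phi (φ : WeakDual ℝ L1R) (hφ : Pos φ) {t : ℕ → Set ℝ}
    (ht : ∀ n, MeasurableSet (t n)) (hd : Pairwise (Disjoint on t))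
    (htU : MeasurableSet (⋃ n, t n)) (hfin : volume (⋃ n, t n) ≠ ∞)
    (hftn : ∀ n, volume (t n) ≠ ∞) :
    HasSum (fun n => φ (indL1 (ht n) (hftn n))) (φ (indL1 htU hfin)) := by
  rw [hasSum_iff_tendsto_nat_of_nonneg (fun i => phi_indL1_nonneg hφ _ _)]
  set A : ℕ → Set ℝ := fun k => ⋃ i, ⋃ (_ : i < k), t i with hAdef
  have hAm : ∀ k, MeasurableSet (A k) :=
    fun k => MeasurableSet.biUnion (Set.to_countable _) (fun i _ => ht i)
  have hAsub : ∀ k, A k ⊆ ⋃ n, t n := fun k => Set.iUnion₂_subset fun i _ => Set.subset_iUnion t i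
  have hAfin : ∀ k, volume (A k) ≠ ∞ :=
    fun k => ((measure_mono (hAsub k)).trans_lt hfin.lt_top).ne
  have hmono : Monotone A := fun i j hij =>
    Set.biUnion_subset_biUnion_left (fun k hk => lt_of_lt_of_le hk hij)
  have hUA : ⋃ k, A k = ⋃ n, t n := by
    ext x
    simp only [hAdef, Set.mem_iUnion]
    constructor
    · rintro ⟨k, i, _, hx⟩; exact ⟨i, hx⟩
    · rintro ⟨i, hx⟩; exact ⟨i + 1, i, Nat.lt_succ_self i, hx⟩
  have hpart : ∀ k, φ (indL1 (hAm k) (hAfin k))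
      = ∑ i ∈ Finset.range k, φ (indL1 (ht i) (hftn i)) := by
    intro k
    induction k with
    | zero =>
        rw [Finset.range_zero, Finset.sum_empty, indL1_zero _ _ (by simp [hAdef]), map_zero]
    | succ n ih =>
        have hstep : A (n + 1) = A n ∪ t n := Set.biUnion_lt_succ t n
        have hdisj : Disjoint (A n) (t n) := by
          rw [Set.disjoint_left]
          rintro x hx hxt
          simp only [hAdef, Set.mem_iUnion] at hx
          obtain ⟨i, hin, hxi⟩ := hx
          exact Set.disjoint_left.1 (hd hin.ne) hxi hxt
        have h1 : indL1 (hAm (n + 1)) (hAfin (n + 1))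
            = indL1 (hAm n) (hAfin n) + indL1 (ht n) (hftn n) := by
          rw [indL1_congr (hAm (n+1)) (hAfin (n+1)) ((hAm n).union (ht n))
            (measure_union_ne_top (hAfin n) (hftn n)) hstep]
          exact indL1_union (hAm n) (ht n) (hAfin n) (hftn n) hdisj
        rw [h1, map_add, ih, Finset.sum_range_succ]
  have := tendsto_phi_indL1 φ hAm htU hfin hAfin hmono hAsub hUA
  refine this.congr ?_
  intro k
  exact hpart k

/-- A partition of `ℝ` into measurable sets of finite volume. -/
def K : ℕ → Set ℝ := disjointed (spanningSets (volume : Measure ℝ))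

lemma K_meas (n : ℕ) : MeasurableSet (K n) :=
  MeasurableSet.disjointed (measurableSet_spanningSets volume) n

lemma K_fin (n : ℕ) : volume (K n) ≠ ∞ :=
  ((measure_mono (disjointed_subset _ n)).trans_lt (measure_spanningSets_lt_top volume n)).ne

lemma K_disj : Pairwise (Disjoint on K) := disjoint_disjointed _

lemma K_union : ⋃ n, K n = Set.univ := by
  rw [K, iUnion_disjointed, iUnion_spanningSets]

lemma interK_fin {s : Set ℝ} (n : ℕ) : volume (s ∩ K n) ≠ ∞ :=
  ((measure_mono Set.inter_subset_right).trans_lt (K_fin n).lt_top).ne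

/-- The set function `s ↦ ∑ₙ (φ (1_{s ∩ Kₙ}))₊` used to build the representing measure. -/
def preM (φ : WeakDual ℝ L1R) (s : Set ℝ) (hs : MeasurableSet s) : ℝ≥0∞ :=
  ∑' n, ENNReal.ofReal (φ (indL1 (hs.inter (K_meas n)) (interK_fin n)))

lemma preM_empty (φ : WeakDual ℝ L1R) : preM φ ∅ MeasurableSet.empty = 0 := by
  rw [preM]
  have : ∀ n : ℕ, ENNReal.ofReal
      (φ (indL1 (MeasurableSet.empty.inter (K_meas n)) (interK_fin n))) = 0 := by
    intro n
    rw [indL1_zero _ _ (Set.empty_inter _), map_zero, ENNReal.ofReal_zero]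
  simp only [this, tsum_zero]

lemma preM_fin (φ : WeakDual ℝ L1R) (hφ : Pos φ) {s : Set ℝ} (hs : MeasurableSet s)
    (hsfin : volume s ≠ ∞) :
    preM φ s hs = ENNReal.ofReal (φ (indL1 hs hsfin)) := by
  have hU : ⋃ n, s ∩ K n = s := by rw [← Set.inter_iUnion, K_union, Set.inter_univ]
  have htU : MeasurableSet (⋃ n, s ∩ K n) :=
    MeasurableSet.iUnion (fun n => hs.inter (K_meas n))
  have hfinU : volume (⋃ n, s ∩ K n) ≠ ∞ := by rw [hU]; exact hsfin
  have hdisj : Pairwise (Disjoint on fun n => s ∩ K n) := fun i j hij =>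
    (K_disj hij).mono Set.inter_subset_right Set.inter_subset_right
  have hsum := hasSum_phi φ hφ (fun n => hs.inter (K_meas n)) hdisj htU hfinU
    (fun n => interK_fin n)
  rw [preM, ← ENNReal.ofReal_tsum_of_nonneg
    (fun n => phi_indL1_nonneg hφ _ _) hsum.summable, hsum.tsum_eq,
    indL1_congr htU hfinU hs hsfin hU]

lemma preM_iUnion (φ : WeakDual ℝ L1R) (hφ : Pos φ) (f : ℕ → Set ℝ)
    (hf : ∀ i, MeasurableSet (f i)) (hd : Pairwise (Disjoint on f)) :
    preM φ (⋃ i, f i) (MeasurableSet.iUnion hf) = ∑' i, preM φ (f i) (hf i) := by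
  rw [preM]
  have key : ∀ n : ℕ, ENNReal.ofReal
      (φ (indL1 ((MeasurableSet.iUnion hf).inter (K_meas n)) (interK_fin n)))
      = ∑' i, ENNReal.ofReal (φ (indL1 ((hf i).inter (K_meas n)) (interK_fin n))) := by
    intro n
    have hU : ⋃ i, f i ∩ K n = (⋃ i, f i) ∩ K n := (Set.iUnion_inter _ _).symm
    have htU : MeasurableSet (⋃ i, f i ∩ K n) :=
      MeasurableSet.iUnion fun i => (hf i).inter (K_meas n)
    have hfinU : volume (⋃ i, f i ∩ K n) ≠ ∞ := by rw [hU]; exact interK_fin n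
    have hdisj : Pairwise (Disjoint on fun i => f i ∩ K n) := fun i j hij =>
      (hd hij).mono Set.inter_subset_left Set.inter_subset_left
    have hsum := hasSum_phi φ hφ (fun i => (hf i).inter (K_meas n)) hdisj htU hfinU
      (fun i => interK_fin n)
    rw [← indL1_congr htU hfinU _ _ hU, ← hsum.tsum_eq,
      ENNReal.ofReal_tsum_of_nonneg (fun i => phi_indL1_nonneg hφ _ _) hsum.summable]
  calc ∑' n, ENNReal.ofReal
        (φ (indL1 ((MeasurableSet.iUnion hf).inter (K_meas n)) (interK_fin n)))
      = ∑' n, ∑' i, ENNReal.ofReal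
          (φ (indL1 ((hf i).inter (K_meas n)) (interK_fin n))) := by
        exact tsum_congr key
    _ = ∑' i, ∑' n, ENNReal.ofReal
          (φ (indL1 ((hf i).inter (K_meas n)) (interK_fin n))) := ENNReal.tsum_comm
    _ = ∑' i, preM φ (f i) (hf i) := rfl

/-- The measure represented by a positive dominated functional `φ`. -/
def classMeasure (φ : WeakDual ℝ L1R) (hφ : Pos φ) : Measure ℝ :=
  Measure.ofMeasurable (fun s hs => preM φ s hs) (preM_empty φ) (preM_iUnion φ hφ)

lemma classMeasure_apply (φ : WeakDual ℝ L1R) (hφ : Pos φ) {s : Set ℝ}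
    (hs : MeasurableSet s) : classMeasure φ hφ s = preM φ s hs :=
  Measure.ofMeasurable_apply s hs

lemma classMeasure_le (φ : WeakDual ℝ L1R) (hφ : Pos φ) : classMeasure φ hφ ≤ volume := by
  refine Measure.le_iff.2 fun s hs => ?_
  rw [classMeasure_apply φ hφ hs, preM]
  have hdisj : Pairwise (Disjoint on fun n => s ∩ K n) := fun i j hij =>
    (K_disj hij).mono Set.inter_subset_right Set.inter_subset_right
  have hU : ⋃ n, s ∩ K n = s := by rw [← Set.inter_iUnion, K_union, Set.inter_univ]
  calc ∑' n, ENNReal.ofReal (φ (indL1 (hs.inter (K_meas n)) (interK_fin n)))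
      ≤ ∑' n, volume (s ∩ K n) := by
        refine ENNReal.tsum_le_tsum fun n => ?_
        exact ENNReal.ofReal_le_of_le_toReal (phi_indL1_le hφ _ _)
    _ = volume (⋃ n, s ∩ K n) :=
        (measure_iUnion hdisj (fun n => hs.inter (K_meas n))).symm
    _ = volume s := by rw [hU]

lemma classMeasure_fin (φ : WeakDual ℝ L1R) (hφ : Pos φ) {s : Set ℝ}
    (hs : MeasurableSet s) (hsfin : volume s ≠ ∞) :
    classMeasure φ hφ s = ENNReal.ofReal (φ (indL1 hs hsfin)) := by
  rw [classMeasure_apply φ hφ hs, preM_fin φ hφ hs hsfin]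


/-- The representing density. -/
def delta (φ : WeakDual ℝ L1R) (hφ : Pos φ) : ℝ → ℝ :=
  fun x => min ((classMeasure φ hφ).rnDeriv volume x).toReal 1

lemma delta_measurable (φ : WeakDual ℝ L1R) (hφ : Pos φ) : Measurable (delta φ hφ) :=
  ((Measure.measurable_rnDeriv _ _).ennreal_toReal).min measurable_const

lemma delta_nonneg (φ : WeakDual ℝ L1R) (hφ : Pos φ) (x : ℝ) : 0 ≤ delta φ hφ x :=
  le_min ENNReal.toReal_nonneg zero_le_one

lemma delta_le_one (φ : WeakDual ℝ L1R) (hφ : Pos φ) (x : ℝ) : delta φ hφ x ≤ 1 :=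
  min_le_right _ _

lemma delta_ae_eq (φ : WeakDual ℝ L1R) (hφ : Pos φ) :
    delta φ hφ =ᵐ[(volume : Measure ℝ)]
      fun x => ((classMeasure φ hφ).rnDeriv volume x).toReal := by
  haveI : SigmaFinite (classMeasure φ hφ) :=
    Measure.sigmaFinite_of_le volume (classMeasure_le φ hφ)
  filter_upwards [Measure.rnDeriv_le_one_of_le (classMeasure_le φ hφ)] with x hx
  have : ((classMeasure φ hφ).rnDeriv volume x).toReal ≤ 1 := by
    have := ENNReal.toReal_mono ENNReal.one_ne_top hx
    simpa using this
  simp [delta, min_eq_left this]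

lemma setIntegral_delta (φ : WeakDual ℝ L1R) (hφ : Pos φ) {s : Set ℝ}
    (hs : MeasurableSet s) (hsfin : volume s ≠ ∞) :
    ∫ x in s, delta φ hφ x = φ (indL1 hs hsfin) := by
  haveI : SigmaFinite (classMeasure φ hφ) :=
    Measure.sigmaFinite_of_le volume (classMeasure_le φ hφ)
  have hac : classMeasure φ hφ ≪ volume :=
    Measure.absolutelyContinuous_of_le (classMeasure_le φ hφ)
  have h1 : ∫ x in s, delta φ hφ x
      = ∫ x in s, ((classMeasure φ hφ).rnDeriv volume x).toReal := by
    exact integral_congr_ae (ae_restrict_of_ae (delta_ae_eq φ hφ))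
  rw [h1]
  have h2 : ∫ x in s, ((classMeasure φ hφ).rnDeriv volume x).toReal
      = ((∫⁻ x in s, (classMeasure φ hφ).rnDeriv volume x)).toReal := by
    refine integral_toReal ((Measure.measurable_rnDeriv _ _).aemeasurable) ?_
    exact ae_restrict_of_ae (Measure.rnDeriv_lt_top _ _)
  rw [h2, Measure.setLIntegral_rnDeriv hac s, classMeasure_fin φ hφ hs hsfin,
    ENNReal.toReal_ofReal (phi_indL1_nonneg hφ hs hsfin)]

lemma integrable_mul_delta (φ : WeakDual ℝ L1R) (hφ : Pos φ) (f : ℝ → ℝ)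
    (hf : Integrable f (volume : Measure ℝ)) (hfm : AEStronglyMeasurable f volume) :
    Integrable (fun x => f x * delta φ hφ x) (volume : Measure ℝ) := by
  refine Integrable.mono' hf.norm (hfm.mul (delta_measurable φ hφ).aestronglyMeasurable) ?_
  refine Eventually.of_forall fun x => ?_
  simp only [norm_mul]
  have h1 : ‖delta φ hφ x‖ ≤ 1 := by
    rw [Real.norm_eq_abs, abs_of_nonneg (delta_nonneg φ hφ x)]
    exact delta_le_one φ hφ x
  calc ‖f x‖ * ‖delta φ hφ x‖ ≤ ‖f x‖ * 1 :=
        mul_le_mul_of_nonneg_left h1 (norm_nonneg _)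
    _ = ‖f x‖ := mul_one _

lemma continuous_int_delta (φ : WeakDual ℝ L1R) (hφ : Pos φ) :
    Continuous (fun f : L1R => ∫ x, (f : ℝ → ℝ) x * delta φ hφ x) := by
  have hlip : LipschitzWith 1 (fun f : L1R => ∫ x, (f : ℝ → ℝ) x * delta φ hφ x) := by
    refine LipschitzWith.of_dist_le_mul fun f g => ?_
    rw [Real.dist_eq, dist_eq_norm, NNReal.coe_one, one_mul]
    have hif : Integrable (fun x => (f : ℝ → ℝ) x * delta φ hφ x) volume :=
      integrable_mul_delta φ hφ _ (L1.integrable_coeFn f) (Lp.aestronglyMeasurable f)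
    have hig : Integrable (fun x => (g : ℝ → ℝ) x * delta φ hφ x) volume :=
      integrable_mul_delta φ hφ _ (L1.integrable_coeFn g) (Lp.aestronglyMeasurable g)
    rw [← integral_sub hif hig]
    have heq : (fun x => (f : ℝ → ℝ) x * delta φ hφ x - (g : ℝ → ℝ) x * delta φ hφ x)
        =ᵐ[(volume : Measure ℝ)] fun x => ((f - g : L1R) : ℝ → ℝ) x * delta φ hφ x := by
      filter_upwards [Lp.coeFn_sub f g] with x hx
      rw [hx, Pi.sub_apply]; ring
    rw [integral_congr_ae heq, L1.norm_eq_integral_norm]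
    calc |∫ x, ((f - g : L1R) : ℝ → ℝ) x * delta φ hφ x|
        ≤ ∫ x, ‖((f - g : L1R) : ℝ → ℝ) x * delta φ hφ x‖ := by
          rw [← Real.norm_eq_abs]; exact norm_integral_le_integral_norm _
      _ ≤ ∫ x, ‖((f - g : L1R) : ℝ → ℝ) x‖ := by
          refine integral_mono_of_nonneg (Eventually.of_forall fun x => norm_nonneg _)
            (L1.integrable_coeFn (f - g)).norm (Eventually.of_forall fun x => ?_)
          simp only [norm_mul]
          have h1 : ‖delta φ hφ x‖ ≤ 1 := by
            rw [Real.norm_eq_abs, abs_of_nonneg (delta_nonneg φ hφ x)]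
            exact delta_le_one φ hφ x
          calc ‖((f - g : L1R) : ℝ → ℝ) x‖ * ‖delta φ hφ x‖
              ≤ ‖((f - g : L1R) : ℝ → ℝ) x‖ * 1 :=
                mul_le_mul_of_nonneg_left h1 (norm_nonneg _)
            _ = _ := mul_one _
  exact hlip.continuous

lemma mem_classifierSet_of_pos (φ : WeakDual ℝ L1R) (hφ : Pos φ) : φ ∈ classifierSet := by
  refine ⟨delta φ hφ, ⟨delta_measurable φ hφ,
    Eventually.of_forall fun x => ⟨delta_nonneg φ hφ x, delta_le_one φ hφ x⟩⟩, ?_⟩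
  have hrep : ∀ f : L1R, φ f = ∫ x, (f : ℝ → ℝ) x * delta φ hφ x := by
    refine Lp.induction ENNReal.one_ne_top
      (fun f : L1R => φ f = ∫ x, (f : ℝ → ℝ) x * delta φ hφ x) ?_ ?_ ?_
    · intro c s hs hμs
      rw [Lp.simpleFunc.coe_indicatorConst]
      have hR : ∫ x, (indicatorConstLp 1 hs hμs.ne c : ℝ → ℝ) x * delta φ hφ x
          = c * φ (indL1 hs hμs.ne) := by
        have hcongr : (fun x => (indicatorConstLp 1 hs hμs.ne c : ℝ → ℝ) x * delta φ hφ x)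
            =ᵐ[(volume : Measure ℝ)]
            fun x => s.indicator (fun y => c * delta φ hφ y) x := by
          filter_upwards [indicatorConstLp_coeFn (p := 1) (hs := hs) (hμs := hμs.ne) (c := c)]
            with x hx
          rw [hx, ← Set.indicator_mul_left]
        rw [integral_congr_ae hcongr, integral_indicator hs, integral_const_mul,
          setIntegral_delta φ hφ hs hμs.ne]
      rw [hR]
      have hx1' : ⇑(indL1 hs hμs.ne) =ᵐ[(volume : Measure ℝ)]
          s.indicator (fun _ => (1:ℝ)) := by
        rw [indL1]; exact indicatorConstLp_coeFn
      have hL : indicatorConstLp 1 hs hμs.ne c = c • indL1 hs hμs.ne := by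
        refine Lp.ext (indicatorConstLp_coeFn.trans ?_)
        filter_upwards [Lp.coeFn_smul c (indL1 hs hμs.ne), hx1'] with x hx hx1
        rw [hx, Pi.smul_apply, hx1]
        simp only [Set.indicator]
        split_ifs <;> simp
      rw [hL, _root_.map_smul, smul_eq_mul]
    · intro f g hf hg hdisj hPf hPg
      rw [map_add, hPf, hPg]
      have hif : Integrable (fun x => ((MemLp.toLp f hf : L1R) : ℝ → ℝ) x * delta φ hφ x) volume :=
        integrable_mul_delta φ hφ _ (L1.integrable_coeFn _) (Lp.aestronglyMeasurable _)
      have hig : Integrable (fun x => ((MemLp.toLp g hg : L1R) : ℝ → ℝ) x * delta φ hφ x) volume :=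
        integrable_mul_delta φ hφ _ (L1.integrable_coeFn _) (Lp.aestronglyMeasurable _)
      rw [← integral_add hif hig]
      refine integral_congr_ae ?_
      filter_upwards [Lp.coeFn_add (MemLp.toLp f hf) (MemLp.toLp g hg)] with x hx
      rw [hx, Pi.add_apply]; ring
    · exact isClosed_eq (map_continuous φ) (continuous_int_delta φ hφ)
  exact hrep

lemma pos_of_mem_classifierSet {φ : WeakDual ℝ L1R} (hmem : φ ∈ classifierSet) : Pos φ := by
  obtain ⟨δ, ⟨hmeas, hae⟩, hrep⟩ := hmem
  intro f hf
  rw [hrep f]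
  have hint : Integrable (fun x => (f : ℝ → ℝ) x * δ x) (volume : Measure ℝ) := by
    refine Integrable.mono' (L1.integrable_coeFn f).norm
      ((Lp.aestronglyMeasurable f).mul hmeas.aestronglyMeasurable) ?_
    filter_upwards [hae] with x hx
    simp only [norm_mul]
    calc ‖(f : ℝ → ℝ) x‖ * ‖δ x‖ ≤ ‖(f : ℝ → ℝ) x‖ * 1 := by
          refine mul_le_mul_of_nonneg_left ?_ (norm_nonneg _)
          rw [Real.norm_eq_abs, abs_of_nonneg hx.1]; exact hx.2
      _ = ‖(f : ℝ → ℝ) x‖ := mul_one _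
  constructor
  · refine integral_nonneg_of_ae ?_
    filter_upwards [hf, hae] with x hfx hx
    exact mul_nonneg hfx hx.1
  · refine integral_mono_ae hint (L1.integrable_coeFn f) ?_
    filter_upwards [hf, hae] with x hfx hx
    calc (f : ℝ → ℝ) x * δ x ≤ (f : ℝ → ℝ) x * 1 :=
          mul_le_mul_of_nonneg_left hx.2 hfx
      _ = (f : ℝ → ℝ) x := mul_one _

lemma classifierSet_eq_pos : classifierSet = {φ : WeakDual ℝ L1R | Pos φ} := by
  ext φ
  exact ⟨fun h => pos_of_mem_classifierSet h, fun h => mem_classifierSet_of_pos φ h⟩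

lemma isClosed_classifierSet : IsClosed classifierSet := by
  rw [classifierSet_eq_pos]
  have heq : {φ : WeakDual ℝ L1R | Pos φ}
      = ⋂ (f : L1R) (_ : 0 ≤ᵐ[(volume : Measure ℝ)] ⇑f),
        ((fun φ : WeakDual ℝ L1R => φ f) ⁻¹' Set.Icc 0 (∫ s, (f : ℝ → ℝ) s)) := by
    ext φ
    simp only [Set.mem_setOf_eq, Set.mem_iInter, Set.mem_preimage, Set.mem_Icc, Pos]
  rw [heq]
  exact isClosed_iInter fun f => isClosed_iInter fun _ =>
    isClosed_Icc.preimage (WeakDual.eval_continuous f)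

lemma isBounded_classifierSet :
    Bornology.IsBounded (StrongDual.toWeakDual ⁻¹' classifierSet) := by
  refine Bornology.IsBounded.subset (Metric.isBounded_closedBall (x := (0 : StrongDual ℝ L1R)) (r := 1)) ?_
  intro ψ hψ
  rw [Set.mem_preimage] at hψ
  obtain ⟨δ, ⟨hmeas, hae⟩, hrep⟩ := hψ
  rw [Metric.mem_closedBall, dist_zero_right]
  refine ContinuousLinearMap.opNorm_le_bound ψ zero_le_one fun f => ?_
  have hψf : ψ f = ∫ x, (f : ℝ → ℝ) x * δ x := hrep f
  rw [hψf, one_mul]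
  calc ‖∫ x, (f : ℝ → ℝ) x * δ x‖ ≤ ∫ x, ‖(f : ℝ → ℝ) x * δ x‖ :=
        norm_integral_le_integral_norm _
    _ ≤ ∫ x, ‖(f : ℝ → ℝ) x‖ := by
        refine integral_mono_of_nonneg (Eventually.of_forall fun x => norm_nonneg _)
          (L1.integrable_coeFn f).norm ?_
        filter_upwards [hae] with x hx
        simp only [norm_mul]
        calc ‖(f : ℝ → ℝ) x‖ * ‖δ x‖ ≤ ‖(f : ℝ → ℝ) x‖ * 1 := by
              refine mul_le_mul_of_nonneg_left ?_ (norm_nonneg _)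
              rw [Real.norm_eq_abs, abs_of_nonneg hx.1]; exact hx.2
          _ = ‖(f : ℝ → ℝ) x‖ := mul_one _
    _ = ‖f‖ := (L1.norm_eq_integral_norm f).symm

lemma isCompact_classifierSet : IsCompact classifierSet :=
  WeakDual.isCompact_of_bounded_of_closed isBounded_classifierSet isClosed_classifierSet

lemma zero_mem_classifierSet : (0 : WeakDual ℝ L1R) ∈ classifierSet := by
  refine ⟨fun _ => 0, ⟨measurable_const, Eventually.of_forall fun x => by norm_num⟩, fun f => ?_⟩
  rw [show ((0 : WeakDual ℝ L1R) f) = 0 from rfl]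
  simp

end QuotaAux

/-- The quota-constrained designer problem admits an optimal classifier: for
probability densities `g₀, g₁ ∈ L¹(ℝ)`, continuous `F`, `r > 0`, payoff parameters,
and quota `q ∈ (0,1]`, the feasible set `D_q = {δ ∈ D : v(δ) ≤ q}` is nonempty and
weak-* compact, and some `δ* ∈ D_q` maximizes `u_D` over `D_q`. -/
theorem quota_feasible_compact_and_optimum_exists
    (g₀ g₁ : Lp ℝ 1 (volume : Measure ℝ))
    (hg₀pos : 0 ≤ᵐ[(volume : Measure ℝ)] ⇑g₀) (hg₁pos : 0 ≤ᵐ[(volume : Measure ℝ)] ⇑g₁)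
    (hg₀norm : ∫ s, g₀ s = 1) (hg₁norm : ∫ s, g₁ s = 1)
    (F : ℝ → ℝ) (hF : Continuous F) (r : ℝ) (hr : 0 < r) (A₁ A₀ B₀ B₁ : ℝ)
    (q : ℝ) (hq : q ∈ Set.Ioc (0 : ℝ) 1) :
    ({φ ∈ classifierSet | rewardedShare F r g₀ g₁ φ ≤ q}).Nonempty ∧
    IsCompact {φ ∈ classifierSet | rewardedShare F r g₀ g₁ φ ≤ q} ∧
    ∃ φstar ∈ {φ ∈ classifierSet | rewardedShare F r g₀ g₁ φ ≤ q},
      ∀ φ ∈ {φ ∈ classifierSet | rewardedShare F r g₀ g₁ φ ≤ q},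
        designerPayoff F r A₁ A₀ B₀ B₁ g₀ g₁ φ ≤ designerPayoff F r A₁ A₀ B₀ B₁ g₀ g₁ φstar := by
  classical
  have hT : Continuous fun φ : WeakDual ℝ (Lp ℝ 1 (volume : Measure ℝ)) => TPR g₁ φ :=
    WeakDual.eval_continuous g₁
  have hFP : Continuous fun φ : WeakDual ℝ (Lp ℝ 1 (volume : Measure ℝ)) => FPR g₀ φ :=
    WeakDual.eval_continuous g₀
  have hprev : Continuous fun φ : WeakDual ℝ (Lp ℝ 1 (volume : Measure ℝ)) =>
      prevalence F r g₀ g₁ φ := hF.comp (continuous_const.mul (hT.sub hFP))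
  have hv : Continuous fun φ : WeakDual ℝ (Lp ℝ 1 (volume : Measure ℝ)) =>
      rewardedShare F r g₀ g₁ φ :=
    (hprev.mul hT).add ((continuous_const.sub hprev).mul hFP)
  have hu : Continuous fun φ : WeakDual ℝ (Lp ℝ 1 (volume : Measure ℝ)) =>
      designerPayoff F r A₁ A₀ B₀ B₁ g₀ g₁ φ :=
    (hprev.mul ((hT.mul continuous_const).add
      ((continuous_const.sub hT).mul continuous_const))).add
      ((continuous_const.sub hprev).mul ((hFP.mul continuous_const).add
        ((continuous_const.sub hFP).mul continuous_const)))
  have hcomp : IsCompact {φ ∈ classifierSet | rewardedShare F r g₀ g₁ φ ≤ q} :=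
    QuotaAux.isCompact_classifierSet.inter_right
      (isClosed_le hv continuous_const)
  have h0app : ∀ f : Lp ℝ 1 (volume : Measure ℝ),
      (0 : WeakDual ℝ (Lp ℝ 1 (volume : Measure ℝ))) f = 0 := fun _ => rfl
  have hv0 : rewardedShare F r g₀ g₁ 0 = 0 := by
    simp [rewardedShare, TPR, FPR, h0app]
  have hne : ({φ ∈ classifierSet | rewardedShare F r g₀ g₁ φ ≤ q}).Nonempty :=
    ⟨0, QuotaAux.zero_mem_classifierSet, by rw [hv0]; exact hq.1.le⟩
  obtain ⟨φs, hφs, hmax⟩ := hcomp.exists_isMaxOn hne hu.continuousOn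
  exact ⟨hne, hcomp, φs, hφs, fun φ hφ => (isMaxOn_iff.1 hmax) φ hφ⟩


end
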